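/- Let v, w, c ∈ Q and let 1 ≤ i, k, p ≤ m with k ≠ p. Then the triple commutator [E*_{i,v}, [E_{k,w}, E*_{p,c}]] acts on M as follows: (1) if i = k, it sends (z,x,f) to (z + f_p(x)·⟨c,w⟩·v, x, f − (⟨v,z⟩ + f_k(x)·q(v) + f_p(x)·⟨c,w⟩·q(v))·⟨c,w⟩·f_p + f_p(x)·⟨c,w⟩·q(v)·f_k); (2) if i ≠ k (in particular if i = p), it is the identity automorphism of M. -/

import Mathlib

open QuadraticMap
open scoped commutatorElement

/-- The DSER elementary orthogonal transformation `E_{i,w}` on `M = Q ⊕ P ⊕ P*`,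
`P = A^m`:  `E_{i,w}(z,x,f) = (z − f(xᵢ)•w, x + ⟨w,z⟩•xᵢ − f(xᵢ)·q(w)•xᵢ, f)`. -/
noncomputable def Eplus {A Q : Type*} [CommRing A] [AddCommGroup Q] [Module A Q]
    {m : ℕ} (q : QuadraticForm A Q) (i : Fin m) (w : Q) :
    (Q × (Fin m → A) × (Fin m → A)) ≃ₗ[A] (Q × (Fin m → A) × (Fin m → A)) where
  toFun p := (p.1 - p.2.2 i • w,
    p.2.1 + polar ⇑q w p.1 • (Pi.single i 1 : Fin m → A)
      - (p.2.2 i * q w) • (Pi.single i 1 : Fin m → A),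
    p.2.2)
  invFun p := (p.1 + p.2.2 i • w,
    p.2.1 - polar ⇑q w p.1 • (Pi.single i 1 : Fin m → A)
      - (p.2.2 i * q w) • (Pi.single i 1 : Fin m → A),
    p.2.2)
  map_add' p p' := by
    obtain ⟨z, x, f⟩ := p
    obtain ⟨z', x', f'⟩ := p'
    refine Prod.ext ?_ (Prod.ext ?_ rfl)
    · show z + z' - (f i + f' i) • w = (z - f i • w) + (z' - f' i • w)
      module
    · show x + x' + polar ⇑q w (z + z') • (Pi.single i 1 : Fin m → A)
        - ((f i + f' i) * q w) • (Pi.single i 1 : Fin m → A) = _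
      rw [polar_add_right]
      show _ = (x + polar ⇑q w z • (Pi.single i 1 : Fin m → A) - (f i * q w) • (Pi.single i 1 : Fin m → A))
        + (x' + polar ⇑q w z' • (Pi.single i 1 : Fin m → A) - (f' i * q w) • (Pi.single i 1 : Fin m → A))
      module
  map_smul' a p := by
    obtain ⟨z, x, f⟩ := p
    refine Prod.ext ?_ (Prod.ext ?_ rfl)
    · show a • z - (a • f) i • w = a • (z - f i • w)
      simp only [Pi.smul_apply, smul_eq_mul]
      module
    · show a • x + polar ⇑q w (a • z) • (Pi.single i 1 : Fin m → A)
        - ((a • f) i * q w) • (Pi.single i 1 : Fin m → A)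
        = a • (x + polar ⇑q w z • (Pi.single i 1 : Fin m → A) - (f i * q w) • (Pi.single i 1 : Fin m → A))
      rw [polar_smul_right]
      simp only [Pi.smul_apply, smul_eq_mul]
      module
  left_inv p := by
    obtain ⟨z, x, f⟩ := p
    refine Prod.ext ?_ (Prod.ext ?_ rfl)
    · show z - f i • w + f i • w = z
      module
    · show x + polar ⇑q w z • (Pi.single i 1 : Fin m → A) - (f i * q w) • (Pi.single i 1 : Fin m → A)
        - polar ⇑q w (z - f i • w) • (Pi.single i 1 : Fin m → A)
        - (f i * q w) • (Pi.single i 1 : Fin m → A) = x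
      rw [polar_sub_right, polar_smul_right, polar_self]
      simp only [smul_eq_mul]
      module
  right_inv p := by
    obtain ⟨z, x, f⟩ := p
    refine Prod.ext ?_ (Prod.ext ?_ rfl)
    · show z + f i • w - f i • w = z
      module
    · show x - polar ⇑q w z • (Pi.single i 1 : Fin m → A) - (f i * q w) • (Pi.single i 1 : Fin m → A)
        + polar ⇑q w (z + f i • w) • (Pi.single i 1 : Fin m → A)
        - (f i * q w) • (Pi.single i 1 : Fin m → A) = x
      rw [polar_add_right, polar_smul_right, polar_self]
      simp only [smul_eq_mul]
      module

/-- The DSER elementary orthogonal transformation `E*_{i,w}` on `M = Q ⊕ P ⊕ P*`: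
`E*_{i,w}(z,x,f) = (z − fᵢ(x)•w, x, f + ⟨w,z⟩•fᵢ − fᵢ(x)·q(w)•fᵢ)`. -/
noncomputable def Estar {A Q : Type*} [CommRing A] [AddCommGroup Q] [Module A Q]
    {m : ℕ} (q : QuadraticForm A Q) (i : Fin m) (w : Q) :
    (Q × (Fin m → A) × (Fin m → A)) ≃ₗ[A] (Q × (Fin m → A) × (Fin m → A)) where
  toFun p := (p.1 - p.2.1 i • w,
    p.2.1,
    p.2.2 + polar ⇑q w p.1 • (Pi.single i 1 : Fin m → A)
      - (p.2.1 i * q w) • (Pi.single i 1 : Fin m → A))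
  invFun p := (p.1 + p.2.1 i • w,
    p.2.1,
    p.2.2 - polar ⇑q w p.1 • (Pi.single i 1 : Fin m → A)
      - (p.2.1 i * q w) • (Pi.single i 1 : Fin m → A))
  map_add' p p' := by
    obtain ⟨z, x, f⟩ := p
    obtain ⟨z', x', f'⟩ := p'
    refine Prod.ext ?_ (Prod.ext rfl ?_)
    · show z + z' - (x i + x' i) • w = (z - x i • w) + (z' - x' i • w)
      module
    · show f + f' + polar ⇑q w (z + z') • (Pi.single i 1 : Fin m → A)
        - ((x i + x' i) * q w) • (Pi.single i 1 : Fin m → A) = _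
      rw [polar_add_right]
      show _ = (f + polar ⇑q w z • (Pi.single i 1 : Fin m → A)
          - (x i * q w) • (Pi.single i 1 : Fin m → A))
        + (f' + polar ⇑q w z' • (Pi.single i 1 : Fin m → A)
          - (x' i * q w) • (Pi.single i 1 : Fin m → A))
      module
  map_smul' a p := by
    obtain ⟨z, x, f⟩ := p
    refine Prod.ext ?_ (Prod.ext rfl ?_)
    · show a • z - (a • x) i • w = a • (z - x i • w)
      simp only [Pi.smul_apply, smul_eq_mul]
      module
    · show a • f + polar ⇑q w (a • z) • (Pi.single i 1 : Fin m → A)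
        - ((a • x) i * q w) • (Pi.single i 1 : Fin m → A)
        = a • (f + polar ⇑q w z • (Pi.single i 1 : Fin m → A)
          - (x i * q w) • (Pi.single i 1 : Fin m → A))
      rw [polar_smul_right]
      simp only [Pi.smul_apply, smul_eq_mul]
      module
  left_inv p := by
    obtain ⟨z, x, f⟩ := p
    refine Prod.ext ?_ (Prod.ext rfl ?_)
    · show z - x i • w + x i • w = z
      module
    · show f + polar ⇑q w z • (Pi.single i 1 : Fin m → A)
        - (x i * q w) • (Pi.single i 1 : Fin m → A)
        - polar ⇑q w (z - x i • w) • (Pi.single i 1 : Fin m → A)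
        - (x i * q w) • (Pi.single i 1 : Fin m → A) = f
      rw [polar_sub_right, polar_smul_right, polar_self]
      simp only [smul_eq_mul]
      module
  right_inv p := by
    obtain ⟨z, x, f⟩ := p
    refine Prod.ext ?_ (Prod.ext rfl ?_)
    · show z + x i • w - x i • w = z
      module
    · show f - polar ⇑q w z • (Pi.single i 1 : Fin m → A)
        - (x i * q w) • (Pi.single i 1 : Fin m → A)
        + polar ⇑q w (z + x i • w) • (Pi.single i 1 : Fin m → A)
        - (x i * q w) • (Pi.single i 1 : Fin m → A) = f
      rw [polar_add_right, polar_smul_right, polar_self]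
      simp only [smul_eq_mul]
      module


section DSERhelpers

variable {A Q : Type*} [CommRing A] [AddCommGroup Q] [Module A Q]
    {m : ℕ} (q : QuadraticForm A Q)

lemma Eplus_apply' (i : Fin m) (w z : Q) (x f : Fin m → A) : Eplus q i w (z, x, f)
    = (z - f i • w,
       x + polar ⇑q w z • (Pi.single i 1 : Fin m → A) - (f i * q w) • (Pi.single i 1 : Fin m → A),
       f) := rfl

lemma Eplus_inv_apply' (i : Fin m) (w z : Q) (x f : Fin m → A) : (Eplus q i w)⁻¹ (z, x, f)
    = (z + f i • w,
       x - polar ⇑q w z • (Pi.single i 1 : Fin m → A) - (f i * q w) • (Pi.single i 1 : Fin m → A),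
       f) := rfl

lemma Estar_apply' (i : Fin m) (w z : Q) (x f : Fin m → A) : Estar q i w (z, x, f)
    = (z - x i • w,
       x,
       f + polar ⇑q w z • (Pi.single i 1 : Fin m → A) - (x i * q w) • (Pi.single i 1 : Fin m → A)) := rfl

lemma Estar_inv_apply' (i : Fin m) (w z : Q) (x f : Fin m → A) : (Estar q i w)⁻¹ (z, x, f)
    = (z + x i • w,
       x,
       f - polar ⇑q w z • (Pi.single i 1 : Fin m → A) - (x i * q w) • (Pi.single i 1 : Fin m → A)) := rfl

lemma commEE_apply (k p : Fin m) (hkp : k ≠ p) (w c z : Q) (x f : Fin m → A) :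
    ⁅Eplus q k w, Estar q p c⁆ (z, x, f)
      = (z, x - (x p * polar ⇑q w c) • (Pi.single k 1 : Fin m → A),
         f + (f k * polar ⇑q c w) • (Pi.single p 1 : Fin m → A)) := by
  show (Eplus q k w) ((Estar q p c) ((Eplus q k w)⁻¹ ((Estar q p c)⁻¹ (z, x, f)))) = _
  simp only [Estar_inv_apply', Eplus_inv_apply', Estar_apply', Eplus_apply',
    Pi.add_apply, Pi.sub_apply, Pi.smul_apply, smul_eq_mul,
    Pi.single_eq_same, Pi.single_eq_of_ne hkp, Pi.single_eq_of_ne hkp.symm,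
    polar_add_right, polar_sub_right, polar_smul_right, polar_self,
    mul_zero, mul_one, add_zero, sub_zero, zero_mul, smul_zero, zero_smul]
  refine Prod.ext ?_ (Prod.ext ?_ ?_) <;> module

lemma commEE_inv_apply (k p : Fin m) (hkp : k ≠ p) (w c z : Q) (x f : Fin m → A) :
    ⁅Eplus q k w, Estar q p c⁆⁻¹ (z, x, f)
      = (z, x + (x p * polar ⇑q w c) • (Pi.single k 1 : Fin m → A),
         f - (f k * polar ⇑q c w) • (Pi.single p 1 : Fin m → A)) := by
  show (⁅Eplus q k w, Estar q p c⁆).symm (z, x, f) = _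
  rw [LinearEquiv.symm_apply_eq, commEE_apply q k p hkp]
  simp only [Pi.add_apply, Pi.sub_apply, Pi.smul_apply, smul_eq_mul,
    Pi.single_eq_same, Pi.single_eq_of_ne hkp, Pi.single_eq_of_ne hkp.symm,
    mul_zero, mul_one, add_zero, sub_zero, zero_mul, smul_zero, zero_smul]
  refine Prod.ext ?_ (Prod.ext ?_ ?_) <;> module

end DSERhelpers

set_option maxHeartbeats 1000000 in
theorem triple_commutator_Estar_EplusEstar
    {A Q : Type*} [CommRing A] [Invertible (2 : A)] [AddCommGroup Q] [Module A Q]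
    {m : ℕ} (q : QuadraticForm A Q) (i k p : Fin m) (hkp : k ≠ p)
    (v w c : Q) :
    (i = k → ∀ (z : Q) (x f : Fin m → A),
      ⁅Estar q i v, ⁅Eplus q k w, Estar q p c⁆⁆ (z, x, f)
        = (z + (x p * polar ⇑q c w) • v,
           x,
           f - ((polar ⇑q v z + x k * q v + x p * polar ⇑q c w * q v)
               * polar ⇑q c w) • (Pi.single p 1 : Fin m → A)
             + (x p * polar ⇑q c w * q v) • (Pi.single k 1 : Fin m → A))) ∧
    (i ≠ k → ⁅Estar q i v, ⁅Eplus q k w, Estar q p c⁆⁆ = 1) := by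
  constructor
  · rintro rfl z x f
    show (Estar q i v) (⁅Eplus q i w, Estar q p c⁆
      ((Estar q i v)⁻¹ (⁅Eplus q i w, Estar q p c⁆⁻¹ (z, x, f)))) = _
    simp only [commEE_inv_apply q i p hkp, commEE_apply q i p hkp,
      Estar_apply', Estar_inv_apply',
      Pi.add_apply, Pi.sub_apply, Pi.smul_apply, smul_eq_mul,
      Pi.single_eq_same, Pi.single_eq_of_ne hkp, Pi.single_eq_of_ne hkp.symm,
      polar_add_right, polar_sub_right, polar_smul_right, polar_self, polar_comm,
      mul_zero, mul_one, add_zero, sub_zero, zero_mul, smul_zero, zero_smul]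
    refine Prod.ext ?_ (Prod.ext ?_ ?_) <;> module
  · intro hik
    refine LinearEquiv.ext fun X => ?_
    obtain ⟨z, x, f⟩ := X
    show ⁅Estar q i v, ⁅Eplus q k w, Estar q p c⁆⁆ (z, x, f) = (z, x, f)
    show (Estar q i v) (⁅Eplus q k w, Estar q p c⁆
      ((Estar q i v)⁻¹ (⁅Eplus q k w, Estar q p c⁆⁻¹ (z, x, f)))) = _
    rcases eq_or_ne i p with rfl | hip
    · simp only [commEE_inv_apply q k i hkp, commEE_apply q k i hkp,
        Estar_apply', Estar_inv_apply',
        Pi.add_apply, Pi.sub_apply, Pi.smul_apply, smul_eq_mul,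
        Pi.single_eq_same, Pi.single_eq_of_ne hkp, Pi.single_eq_of_ne hkp.symm,
        polar_add_right, polar_sub_right, polar_smul_right, polar_self, polar_comm,
        mul_zero, mul_one, add_zero, sub_zero, zero_mul, smul_zero, zero_smul]
      refine Prod.ext ?_ (Prod.ext ?_ ?_) <;> module
    · simp only [commEE_inv_apply q k p hkp, commEE_apply q k p hkp,
        Estar_apply', Estar_inv_apply',
        Pi.add_apply, Pi.sub_apply, Pi.smul_apply, smul_eq_mul,
        Pi.single_eq_same, Pi.single_eq_of_ne hkp, Pi.single_eq_of_ne hkp.symm,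
        Pi.single_eq_of_ne hik, Pi.single_eq_of_ne hik.symm,
        Pi.single_eq_of_ne hip, Pi.single_eq_of_ne hip.symm,
        polar_add_right, polar_sub_right, polar_smul_right, polar_self, polar_comm,
        mul_zero, mul_one, add_zero, sub_zero, zero_mul, smul_zero, zero_smul]
      refine Prod.ext ?_ (Prod.ext ?_ ?_) <;> module
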